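/- Let G and G' be finite 2-edge-connected graphs with orientations, and let φ: F(G) → F(G') be an isometry of their lattices of integer flows. Then φ maps circuit elements of F(G) bijectively to circuit elements of F(G'). -/

import Mathlib

open Finset

/-- The signed flow along a walk `p` relative to an orientation `σ` of the edges:
the number of times `p` traverses `e` in the `σ`-direction minus the number of times
it traverses `e` backwards. -/
def walkFlow {V : Type*} [DecidableEq V] {G : SimpleGraph V} (σ : Sym2 V → V × V)
    {u v : V} (p : G.Walk u v) (e : Sym2 V) : ℤ :=
  ((p.darts.filter (fun d => d.toProd = σ e)).length : ℤ) -
  ((p.darts.filter (fun d => d.toProd = (σ e).swap)).length : ℤ)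

/-- The lattice of integer flows `F(G)` of an oriented graph `(G, σ)`: functions
`a : Sym2 V → ℤ` supported on the edges of `G` satisfying Kirchhoff's law at every
vertex (sum over edges with tail `v` equals sum over edges with head `v`). -/
def flowSubmodule {V : Type*} [Fintype V] [DecidableEq V] (G : SimpleGraph V)
    (σ : Sym2 V → V × V) : Submodule ℤ (Sym2 V → ℤ) where
  carrier := {a | (∀ e, a e ≠ 0 → e ∈ G.edgeSet) ∧
    ∀ v : V, ∑ e ∈ univ.filter (fun e => (σ e).1 = v), a e
           = ∑ e ∈ univ.filter (fun e => (σ e).2 = v), a e}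
  zero_mem' := by simp
  add_mem' := by
    rintro a b ⟨ha1, ha2⟩ ⟨hb1, hb2⟩
    refine ⟨fun e he => ?_, fun v => ?_⟩
    · by_contra h
      exact he (by
        have h1 : a e = 0 := by_contra fun h' => h (ha1 e h')
        have h2 : b e = 0 := by_contra fun h' => h (hb1 e h')
        simp [h1, h2])
    · simp only [Pi.add_apply, Finset.sum_add_distrib, ha2 v, hb2 v]
  smul_mem' := by
    rintro c a ⟨ha1, ha2⟩
    refine ⟨fun e he => ha1 e ?_, fun v => ?_⟩
    · intro h; apply he; simp [h]
    · simp only [Pi.smul_apply, smul_eq_mul, ← Finset.mul_sum, ha2 v]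

/-- The inner product on `Z^{E(G)}` (extended to all of `Z^{Sym2 V}`), with
`(e, f) = δ_{ef}` on edge generators. -/
def flowInner {V : Type*} [Fintype V] [DecidableEq V] (a b : Sym2 V → ℤ) : ℤ :=
  ∑ e : Sym2 V, a e * b e

/-- A circuit element of `F(G)`: the flow of an oriented circuit of `G`, i.e. the
signed indicator of a cycle (coefficients `±1` on the edges of the cycle, compatibly
oriented, and `0` elsewhere). -/
def IsCircuitElement {V : Type*} [DecidableEq V] (G : SimpleGraph V)
    (σ : Sym2 V → V × V) (v : Sym2 V → ℤ) : Prop :=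
  ∃ (u : V) (p : G.Walk u u), p.IsCycle ∧ v = walkFlow σ p

section Aux

open SimpleGraph Walk

variable {V : Type*} [Fintype V] [DecidableEq V] {G : SimpleGraph V} {σ : Sym2 V → V × V}

lemma mem_flowSubmodule {a : Sym2 V → ℤ} :
    a ∈ flowSubmodule G σ ↔ (∀ e, a e ≠ 0 → e ∈ G.edgeSet) ∧
      ∀ v : V, ∑ e ∈ univ.filter (fun e => (σ e).1 = v), a e
             = ∑ e ∈ univ.filter (fun e => (σ e).2 = v), a e := Iff.rfl

lemma walkFlow_nil {u : V} (e : Sym2 V) : walkFlow σ (Walk.nil : G.Walk u u) e = 0 := by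
  simp [walkFlow]

lemma walkFlow_cons {u x y : V} (h : G.Adj u x) (p : G.Walk x y) (e : Sym2 V) :
    walkFlow σ (Walk.cons h p) e =
      ((if (u, x) = σ e then (1 : ℤ) else 0) - (if (u, x) = (σ e).swap then 1 else 0))
        + walkFlow σ p e := by
  simp only [walkFlow, Walk.darts_cons, List.filter_cons, decide_eq_true_eq]
  by_cases h1 : ((u, x) : V × V) = σ e <;> by_cases h2 : ((u, x) : V × V) = (σ e).swap
  · rw [if_pos h1, if_pos h2, if_pos h1, if_pos h2]; simp only [List.length_cons]; push_cast; ring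
  · rw [if_pos h1, if_neg h2, if_pos h1, if_neg h2]; simp only [List.length_cons]; push_cast; ring
  · rw [if_neg h1, if_pos h2, if_neg h1, if_pos h2]; simp only [List.length_cons]; push_cast; ring
  · rw [if_neg h1, if_neg h2, if_neg h1, if_neg h2]; push_cast; ring

lemma sum_filter_ite {P : Sym2 V → Prop} [DecidablePred P] (e₀ : Sym2 V) (c : ℤ) :
    ∑ e ∈ univ.filter P, (if e = e₀ then c else 0) = if P e₀ then c else 0 := by
  classical
  have h : ∀ e, (if P e then (if e = e₀ then c else 0) else 0)
      = (if e = e₀ then (if P e then c else 0) else 0) := by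
    intro e; by_cases h1 : P e <;> by_cases h2 : e = e₀ <;> simp [h1, h2] <;> simp_all
  rw [Finset.sum_filter, Finset.sum_congr rfl fun e _ => h e, Finset.sum_ite_eq']
  simp

variable (hσ : ∀ e, Sym2.mk (σ e).1 (σ e).2 = e)
include hσ

lemma sigma_cases {u x : V} (hne : u ≠ x) : σ (s(u, x)) = (u, x) ∨ σ (s(u, x)) = (x, u) := by
  have h := hσ (s(u, x))
  rcases (Sym2.mk_eq_mk_iff (p := σ (s(u, x))) (q := (u, x))).mp h with h' | h'
  · exact Or.inl h'
  · exact Or.inr (by simpa using h')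

lemma dartD {u x : V} (hne : u ≠ x) (e : Sym2 V) :
    ((if (u, x) = σ e then (1 : ℤ) else 0) - (if (u, x) = (σ e).swap then 1 else 0))
      = if e = s(u, x) then (if σ (s(u, x)) = (u, x) then 1 else -1) else 0 := by
  have hxu : ((u, x) : V × V) ≠ (x, u) := fun h => hne (Prod.ext_iff.mp h).1
  by_cases he : e = s(u, x)
  · subst he
    rcases sigma_cases hσ hne with h' | h'
    · rw [h']
      rw [if_pos rfl, if_pos rfl, if_pos rfl, if_neg (by exact hxu), sub_zero]
    · rw [h']
      rw [if_neg hxu, if_pos rfl, if_pos (by rfl), if_neg (fun h => hxu h.symm)]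
      ring
  · have h1 : ((u, x) : V × V) ≠ σ e := by
      intro h; apply he
      have := hσ e; rw [← h] at this; exact this.symm
    have h2 : ((u, x) : V × V) ≠ (σ e).swap := by
      intro h; apply he
      have h3 : σ e = (x, u) := by
        have := congrArg Prod.swap h; simpa using this.symm
      have := hσ e; rw [h3] at this
      rw [← this]; exact Sym2.eq_swap
    simp [h1, h2, he]

lemma walkFlow_cons' {u x y : V} (h : G.Adj u x) (p : G.Walk x y) (e : Sym2 V) :
    walkFlow σ (Walk.cons h p) e =
      (if e = s(u, x) then (if σ (s(u, x)) = (u, x) then (1:ℤ) else -1) else 0) + walkFlow σ p e := by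
  rw [walkFlow_cons, dartD hσ h.ne]

lemma walkFlow_support {u y : V} (p : G.Walk u y) (e : Sym2 V)
    (h : walkFlow σ p e ≠ 0) : e ∈ G.edgeSet := by
  induction p with
  | nil => simp [walkFlow_nil] at h
  | @cons a b c hab p ih =>
    rw [walkFlow_cons' hσ] at h
    by_cases he : e = s(a, b)
    · subst he; exact hab
    · simp only [he, if_false, zero_add] at h; exact ih h

lemma walkFlow_of_not_mem_edges {u y : V} (p : G.Walk u y) (e : Sym2 V)
    (h : e ∉ p.edges) : walkFlow σ p e = 0 := by
  induction p with
  | nil => simp [walkFlow_nil]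
  | @cons a b c hab p ih =>
    rw [Walk.edges_cons, List.mem_cons] at h
    push_neg at h
    rw [walkFlow_cons' hσ, if_neg h.1, ih h.2, zero_add]

lemma walkFlow_net {u y : V} (p : G.Walk u y) (w : V) :
    ∑ e ∈ univ.filter (fun e => (σ e).1 = w), walkFlow σ p e
      = (∑ e ∈ univ.filter (fun e => (σ e).2 = w), walkFlow σ p e)
        + (if u = w then (1 : ℤ) else 0) - (if y = w then 1 else 0) := by
  induction p with
  | nil => simp [walkFlow_nil]
  | @cons a b c hab p ih =>
    have hrw : ∀ (Q : Sym2 V → Prop) [DecidablePred Q],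
        ∑ e ∈ univ.filter Q, walkFlow σ (Walk.cons hab p) e
          = (if Q (s(a,b)) then (if σ (s(a,b)) = (a,b) then (1:ℤ) else -1) else 0)
            + ∑ e ∈ univ.filter Q, walkFlow σ p e := by
      intro Q _
      rw [Finset.sum_congr rfl fun e _ => walkFlow_cons' hσ hab p e,
        Finset.sum_add_distrib, sum_filter_ite]
    rw [hrw, hrw]
    have hba : ¬ (((b, a) : V × V) = (a, b)) := fun h => hab.ne (Prod.ext_iff.mp h).1.symm
    rcases sigma_cases hσ hab.ne with h' | h'
    · rw [h', if_pos rfl, ih]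
      simp only [h']
      split_ifs <;> ring
    · rw [h', if_neg hba, ih]
      simp only [h']
      split_ifs <;> ring
lemma walkFlow_mem {u : V} (p : G.Walk u u) : walkFlow σ p ∈ flowSubmodule G σ := by
  refine ⟨fun e he => walkFlow_support hσ p e he, fun w => ?_⟩
  have h := walkFlow_net hσ p w
  rcases eq_or_ne u w with rfl | hne
  · simpa using h
  · simp only [if_neg hne] at h; simpa using h

lemma walkFlow_dart {u y : V} {p : G.Walk u y} (hp : p.IsTrail) {d : G.Dart}
    (hd : d ∈ p.darts) : walkFlow σ p d.edge = if d.toProd = σ d.edge then 1 else -1 := by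
  induction p with
  | nil => simp at hd
  | @cons a b c hab p ih =>
    rw [Walk.darts_cons, List.mem_cons] at hd
    have hnotmem : s(a, b) ∉ p.edges := by
      have := hp.edges_nodup
      rw [Walk.edges_cons, List.nodup_cons] at this
      exact this.1
    rcases hd with rfl | hd
    · have hedge : (⟨(a, b), hab⟩ : G.Dart).edge = s(a, b) := rfl
      rw [hedge, walkFlow_cons' hσ, if_pos rfl,
        walkFlow_of_not_mem_edges hσ p _ hnotmem, add_zero]
      have htp : (⟨(a, b), hab⟩ : G.Dart).toProd = (a, b) := rfl
      rw [htp]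
      by_cases hc : σ (s(a, b)) = (a, b)
      · rw [if_pos hc, if_pos hc.symm]
      · rw [if_neg hc, if_neg fun h => hc h.symm]
    · have he : d.edge ∈ p.edges := List.mem_map_of_mem hd
      have hne : d.edge ≠ s(a, b) := fun h => hnotmem (h ▸ he)
      rw [walkFlow_cons' hσ, if_neg hne, ih hp.of_cons hd, zero_add]

lemma flow_on_path_eq_zero {x y : V} (q : G.Walk x y) {a : Sym2 V → ℤ}
    (ha : a ∈ flowSubmodule G σ) :
    q.IsPath → (∀ e, a e ≠ 0 → e ∈ q.edges) → a = 0 := by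
  induction q with
  | nil =>
    intro _ hsupp
    funext e
    by_contra h
    simpa using hsupp e h
  | @cons x x₁ y h q ih =>
    intro hq hsupp
    have hxq : x ∉ q.support := by
      have := hq.support_nodup
      rw [Walk.support_cons, List.nodup_cons] at this
      exact this.1
    have hx : ∀ e, a e ≠ 0 → ((σ e).1 = x ∨ (σ e).2 = x) → e = s(x, x₁) := by
      intro e hae hxe
      have he : e ∈ (Walk.cons h q).edges := hsupp e hae
      rw [Walk.edges_cons, List.mem_cons] at he
      rcases he with he | he
      · exact he
      · exfalso
        have hes : e = s((σ e).1, (σ e).2) := by conv_lhs => rw [← hσ e]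
        have hxm : x ∈ e := by
          rw [hes]
          rcases hxe with hxe | hxe
          · rw [hxe]; exact Sym2.mem_mk_left _ _
          · rw [hxe]; exact Sym2.mem_mk_right _ _
        obtain ⟨z, rfl⟩ := Sym2.mem_iff_exists.mp hxm
        exact hxq (q.fst_mem_support_of_mem_edges he)
    have hsum : ∀ (Q : Sym2 V → Prop) [DecidablePred Q],
        (∀ e, a e ≠ 0 → Q e → e = s(x, x₁)) →
        ∑ e ∈ univ.filter Q, a e = if Q (s(x, x₁)) then a (s(x, x₁)) else 0 := by
      intro Q _ hQ
      refine (Finset.sum_congr rfl fun e he => ?_).trans (sum_filter_ite _ _)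
      rw [Finset.mem_filter] at he
      by_cases hes : e = s(x, x₁)
      · rw [if_pos hes, hes]
      · rw [if_neg hes]
        by_contra hane
        exact hes (hQ e hane he.2)
    have hk := ha.2 x
    rw [hsum _ (fun e hae hQ => hx e hae (Or.inl hQ)),
      hsum _ (fun e hae hQ => hx e hae (Or.inr hQ))] at hk
    have hne := h.ne
    have ha0 : a (s(x, x₁)) = 0 := by
      rcases sigma_cases hσ hne with h' | h' <;> rw [h'] at hk
      · rw [if_pos rfl, if_neg (fun hh : ((x, x₁) : V × V).2 = x => hne hh.symm)] at hk
        exact hk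
      · rw [if_neg (fun hh : ((x₁, x) : V × V).1 = x => hne hh.symm), if_pos rfl] at hk
        exact hk.symm
    refine ih hq.of_cons fun e hae => ?_
    have := hsupp e hae
    rw [Walk.edges_cons, List.mem_cons] at this
    rcases this with rfl | h'
    · exact absurd ha0 hae
    · exact h'
lemma flow_on_cycle {u : V} (p : G.Walk u u) (hp : p.IsCycle) {a : Sym2 V → ℤ}
    (ha : a ∈ flowSubmodule G σ) (hsupp : ∀ e, a e ≠ 0 → e ∈ p.edges) :
    ∃ t : ℤ, a = t • walkFlow σ p := by
  cases p with
  | nil => exact absurd hp (by simp [Walk.isCycle_def])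
  | @cons _ x _ h q =>
    have htrail : (Walk.cons h q).IsTrail := hp.isCircuit.isTrail
    rw [Walk.cons_isCycle_iff] at hp
    obtain ⟨hq, hne⟩ := hp
    set v := walkFlow σ (Walk.cons h q) with hv
    have hd : (⟨(u, x), h⟩ : G.Dart) ∈ (Walk.cons h q).darts := by
      rw [Walk.darts_cons]; exact List.mem_cons_self
    have hv1 : v (s(u, x)) = 1 ∨ v (s(u, x)) = -1 := by
      have := walkFlow_dart hσ htrail hd
      by_cases hc : (⟨(u, x), h⟩ : G.Dart).toProd = σ (⟨(u, x), h⟩ : G.Dart).edge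
      · left; rw [if_pos hc] at this; exact this
      · right; rw [if_neg hc] at this; exact this
    have hvsq : v (s(u, x)) * v (s(u, x)) = 1 := by rcases hv1 with h1 | h1 <;> rw [h1] <;> ring
    set t : ℤ := a (s(u, x)) * v (s(u, x)) with ht
    have hb : a - t • v = 0 := by
      refine flow_on_path_eq_zero hσ q
        (Submodule.sub_mem _ ha (Submodule.smul_mem _ t (walkFlow_mem hσ _))) hq ?_
      intro e hbe
      have hbe' : a e ≠ 0 ∨ v e ≠ 0 := by
        by_contra hcon
        push_neg at hcon
        simp [Pi.sub_apply, hcon.1, hcon.2] at hbe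
      have hecons : e ∈ (Walk.cons h q).edges := by
        rcases hbe' with h' | h'
        · exact hsupp e h'
        · by_contra hmem
          exact h' (walkFlow_of_not_mem_edges hσ _ e hmem)
      have he0 : e ≠ s(u, x) := by
        rintro rfl
        apply hbe
        simp only [Pi.sub_apply, Pi.smul_apply, smul_eq_mul, ht]
        rw [mul_assoc, hvsq, mul_one, sub_self]
      rw [Walk.edges_cons, List.mem_cons] at hecons
      rcases hecons with h' | h'
      · exact absurd h' he0
      · exact h'
    exact ⟨t, by rw [← sub_eq_zero]; exact hb⟩

lemma cycle_exists_pm {u : V} (p : G.Walk u u) (hp : p.IsCycle) :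
    ∃ e, walkFlow σ p e = 1 ∨ walkFlow σ p e = -1 := by
  cases p with
  | nil => exact absurd hp (by simp [Walk.isCycle_def])
  | @cons _ x _ h q =>
    have htrail : (Walk.cons h q).IsTrail := hp.isCircuit.isTrail
    have hd : (⟨(u, x), h⟩ : G.Dart) ∈ (Walk.cons h q).darts := by
      rw [Walk.darts_cons]; exact List.mem_cons_self
    refine ⟨s(u, x), ?_⟩
    have := walkFlow_dart hσ htrail hd
    by_cases hc : (⟨(u, x), h⟩ : G.Dart).toProd = σ (⟨(u, x), h⟩ : G.Dart).edge
    · left; rw [if_pos hc] at this; exact this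
    · right; rw [if_neg hc] at this; exact this

lemma circuit_indec {u : V} (p : G.Walk u u) (hp : p.IsCycle) {a b : Sym2 V → ℤ}
    (ha : a ∈ flowSubmodule G σ) (hb : b ∈ flowSubmodule G σ)
    (hab : a + b = walkFlow σ p) (hin : 0 ≤ flowInner a b) : a = 0 ∨ b = 0 := by
  set v := walkFlow σ p with hv
  have hvpm : ∀ e ∈ p.edges, v e = 1 ∨ v e = -1 := by
    intro e he
    obtain ⟨d, hd, rfl⟩ := List.mem_map.mp he
    have := walkFlow_dart hσ hp.isCircuit.isTrail hd
    by_cases hc : d.toProd = σ d.edge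
    · left; rw [if_pos hc] at this; exact this
    · right; rw [if_neg hc] at this; exact this
  have habe : ∀ e, a e + b e = v e := fun e => congrFun hab e
  have hterm : ∀ e, a e * b e ≤ 0 := by
    intro e
    by_cases he : e ∈ p.edges
    · have hbe : b e = v e - a e := by have := habe e; linarith
      rcases hvpm e he with h1 | h1 <;> rw [hbe, h1]
      · rcases le_or_gt (a e) 0 with h2 | h2
        · nlinarith
        · have h3 : 1 ≤ a e := by omega
          nlinarith
      · rcases le_or_gt 0 (a e) with h2 | h2
        · nlinarith
        · have h3 : a e ≤ -1 := by omega
          nlinarith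
    · have hve : v e = 0 := walkFlow_of_not_mem_edges hσ _ e he
      have hbe : b e = -a e := by have := habe e; rw [hve] at this; linarith
      rw [hbe]; nlinarith [sq_nonneg (a e)]
  have hzero : ∀ e, a e * b e = 0 := by
    have hsum : ∑ e : Sym2 V, a e * b e = 0 :=
      le_antisymm (Finset.sum_nonpos fun e _ => hterm e) (by exact hin)
    intro e
    exact (Finset.sum_eq_zero_iff_of_nonpos fun e _ => hterm e).mp hsum e (Finset.mem_univ e)
  have hsa : ∀ e, a e ≠ 0 → e ∈ p.edges := by
    intro e hae
    by_contra he
    have hve : v e = 0 := walkFlow_of_not_mem_edges hσ _ e he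
    have hbe : b e = -a e := by have := habe e; rw [hve] at this; linarith
    have h2 := hzero e
    rw [hbe] at h2
    exact hae (mul_self_eq_zero.mp (by linarith))
  have hsb : ∀ e, b e ≠ 0 → e ∈ p.edges := by
    intro e hbe
    by_contra he
    have hve : v e = 0 := walkFlow_of_not_mem_edges hσ _ e he
    have hae : a e = -b e := by have := habe e; rw [hve] at this; linarith
    have h2 := hzero e
    rw [hae] at h2
    exact hbe (mul_self_eq_zero.mp (by linarith))
  obtain ⟨s, hs⟩ := flow_on_cycle hσ p hp ha hsa
  obtain ⟨t, htb⟩ := flow_on_cycle hσ p hp hb hsb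
  obtain ⟨e₀, he₀⟩ := cycle_exists_pm hσ p hp
  have hv0 : v e₀ * v e₀ = 1 := by rcases he₀ with h1 | h1 <;> rw [hv, h1] <;> ring
  have hst : s * t = 0 := by
    have := hzero e₀
    rw [hs, htb] at this
    simp only [Pi.smul_apply, smul_eq_mul] at this
    nlinarith
  rcases mul_eq_zero.mp hst with h' | h'
  · left; rw [hs, h', zero_smul]
  · right; rw [htb, h', zero_smul]
variable {v' : Sym2 V → ℤ}

def GoodDart {V : Type*} (G : SimpleGraph V) (σ : Sym2 V → V × V) (v : Sym2 V → ℤ)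
    (d : G.Dart) : Prop :=
  (0 < v d.edge ∧ d.toProd = σ d.edge) ∨ (v d.edge < 0 ∧ d.toProd = (σ d.edge).swap)

omit hσ in
lemma goodDart_eq_of_edge_eq {d d' : G.Dart}
    (hd : GoodDart G σ v' d) (hd' : GoodDart G σ v' d') (he : d.edge = d'.edge) : d = d' := by
  apply SimpleGraph.Dart.ext
  rcases hd with ⟨h1, h2⟩ | ⟨h1, h2⟩ <;> rcases hd' with ⟨h1', h2'⟩ | ⟨h1', h2'⟩
  · rw [h2, h2', he]
  · rw [he] at h1; exact absurd h1' (by omega)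
  · rw [he] at h1; exact absurd h1' (by omega)
  · rw [h2, h2', he]

lemma exists_good_out (hv : v' ∈ flowSubmodule G σ) (w : V)
    (hin : ∃ d : G.Dart, GoodDart G σ v' d ∧ d.snd = w) :
    ∃ d : G.Dart, GoodDart G σ v' d ∧ d.fst = w := by
  obtain ⟨d, hd, hdw⟩ := hin
  by_contra hno
  push_neg at hno
  have hes : ∀ e : Sym2 V, v' e ≠ 0 → e = s((σ e).1, (σ e).2) := by
    intro e _; conv_lhs => rw [← hσ e]
  have hadj : ∀ e : Sym2 V, v' e ≠ 0 → G.Adj (σ e).1 (σ e).2 := by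
    intro e hne
    have heE : e ∈ G.edgeSet := hv.1 e hne
    rw [hes e hne] at heE
    exact heE
  have hout : ∀ e, (σ e).1 = w → v' e ≤ 0 := by
    intro e he
    by_contra hpos
    push_neg at hpos
    have hne : v' e ≠ 0 := by omega
    let d' : G.Dart := ⟨σ e, hadj e hne⟩
    have hde : d'.edge = e := hσ e
    refine hno d' (Or.inl ⟨?_, ?_⟩) ?_
    · rw [hde]; exact hpos
    · rw [hde]
    · exact he
  have hinflow : ∀ e, (σ e).2 = w → 0 ≤ v' e := by
    intro e he
    by_contra hneg
    push_neg at hneg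
    have hne : v' e ≠ 0 := by omega
    let d' : G.Dart := ⟨(σ e).swap, (hadj e hne).symm⟩
    have hde : d'.edge = e := by
      have : d'.edge = s((σ e).2, (σ e).1) := rfl
      rw [this, Sym2.eq_swap, hσ e]
    refine hno d' (Or.inr ⟨?_, ?_⟩) ?_
    · rw [hde]; exact hneg
    · rw [hde]
    · exact he
  have hk := hv.2 w
  have h1 : ∑ e ∈ univ.filter (fun e => (σ e).1 = w), v' e ≤ 0 :=
    Finset.sum_nonpos fun e he => hout e (Finset.mem_filter.mp he).2
  have h2 : 0 ≤ ∑ e ∈ univ.filter (fun e => (σ e).2 = w), v' e :=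
    Finset.sum_nonneg fun e he => hinflow e (Finset.mem_filter.mp he).2
  have hz1 : ∀ e, (σ e).1 = w → v' e = 0 := by
    intro e he
    have := (Finset.sum_eq_zero_iff_of_nonpos
      (fun e he => hout e (Finset.mem_filter.mp he).2)).mp (le_antisymm h1 (by omega))
    exact this e (Finset.mem_filter.mpr ⟨Finset.mem_univ e, he⟩)
  have hz2 : ∀ e, (σ e).2 = w → v' e = 0 := by
    intro e he
    have := (Finset.sum_eq_zero_iff_of_nonneg
      (fun e he => hinflow e (Finset.mem_filter.mp he).2)).mp (le_antisymm (by omega) h2)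
    exact this e (Finset.mem_filter.mpr ⟨Finset.mem_univ e, he⟩)
  rcases hd with ⟨h1', h2'⟩ | ⟨h1', h2'⟩
  · have : (σ d.edge).2 = w := by
      rw [← hdw]
      have : d.toProd.2 = d.snd := rfl
      rw [← this, h2']
    exact absurd (hz2 _ this) (by omega)
  · have : (σ d.edge).1 = w := by
      rw [← hdw]
      have h3 : d.toProd.2 = d.snd := rfl
      rw [← h3, h2']
      rfl
    exact absurd (hz1 _ this) (by omega)

lemma exists_good (hv : v' ∈ flowSubmodule G σ) (hne : v' ≠ 0) :
    ∃ d : G.Dart, GoodDart G σ v' d := by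
  have : ∃ e, v' e ≠ 0 := by
    by_contra h
    push_neg at h
    exact hne (funext h)
  obtain ⟨e, he⟩ := this
  have heE : e ∈ G.edgeSet := hv.1 e he
  have hes : e = s((σ e).1, (σ e).2) := by conv_lhs => rw [← hσ e]
  have hadj : G.Adj (σ e).1 (σ e).2 := by rw [hes] at heE; exact heE
  rcases lt_or_gt_of_ne he with hneg | hpos
  · refine ⟨⟨(σ e).swap, hadj.symm⟩, Or.inr ⟨?_, ?_⟩⟩
    · show v' (s((σ e).2, (σ e).1)) < 0
      rw [Sym2.eq_swap, hσ e]; exact hneg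
    · show (σ e).swap = (σ (s((σ e).2, (σ e).1))).swap
      rw [Sym2.eq_swap, hσ e]
  · refine ⟨⟨σ e, hadj⟩, Or.inl ⟨?_, ?_⟩⟩
    · show 0 < v' (s((σ e).1, (σ e).2))
      rw [hσ e]; exact hpos
    · show σ e = σ (s((σ e).1, (σ e).2))
      rw [hσ e]
def iterWalk {V : Type*} {G : SimpleGraph V} {S : Type*} (f : S → V) (g : S → S)
    (adj : ∀ s, G.Adj (f s) (f (g s))) (x : S) : (j : ℕ) → G.Walk (f x) (f (g^[j] x))
  | 0 => Walk.nil
  | (j + 1) => ((iterWalk f g adj x j).concat (adj _)).copy rfl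
      (by rw [Function.iterate_succ_apply'])

omit hσ in
lemma iterWalk_support {S : Type*} (f : S → V) (g : S → S)
    (adj : ∀ s, G.Adj (f s) (f (g s))) (x : S) (j : ℕ) :
    (iterWalk f g adj x j).support = (List.range (j + 1)).map (fun k => f (g^[k] x)) := by
  induction j with
  | zero => simp [iterWalk, List.range_succ]
  | succ j ih =>
    rw [iterWalk, Walk.support_copy, Walk.support_concat, ih, List.range_succ (n := j + 1)]
    rw [List.map_append]
    congr 1
    simp [Function.iterate_succ_apply']

omit hσ in
lemma iterWalk_toProd {S : Type*} (f : S → V) (g : S → S)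
    (adj : ∀ s, G.Adj (f s) (f (g s))) (x : S) (j : ℕ) :
    (iterWalk f g adj x j).darts.map SimpleGraph.Dart.toProd
      = (List.range j).map (fun k => (f (g^[k] x), f (g^[k + 1] x))) := by
  induction j with
  | zero => simp [iterWalk, List.range_succ]
  | succ j ih =>
    rw [iterWalk, Walk.darts_copy, Walk.darts_concat, List.range_succ, List.map_append,
      List.concat_eq_append, List.map_append, ih]
    congr 1
    simp [Function.iterate_succ_apply']
lemma exists_conforming (hv : v' ∈ flowSubmodule G σ) (hne : v' ≠ 0) :
    ∃ (u : V) (p : G.Walk u u), p.IsCycle ∧ ∀ d ∈ p.darts, GoodDart G σ v' d := by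
  classical
  obtain ⟨d₀, hd₀⟩ := exists_good hσ hv hne
  let S := {w : V // ∃ d : G.Dart, GoodDart G σ v' d ∧ d.snd = w}
  have hstep : ∀ s : S, ∃ d : G.Dart, GoodDart G σ v' d ∧ d.fst = s.val :=
    fun s => exists_good_out hσ hv s.val s.property
  let D : S → G.Dart := fun s => (hstep s).choose
  have hDg : ∀ s, GoodDart G σ v' (D s) := fun s => (hstep s).choose_spec.1
  have hDf : ∀ s, (D s).fst = s.val := fun s => (hstep s).choose_spec.2
  let g : S → S := fun s => ⟨(D s).snd, D s, hDg s, rfl⟩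
  let f : S → V := Subtype.val
  have hgval : ∀ s, f (g s) = (D s).snd := fun s => rfl
  have adj : ∀ s, G.Adj (f s) (f (g s)) := by
    intro s
    rw [hgval, show f s = (D s).fst from (hDf s).symm]
    exact (D s).adj
  have hfinj : Function.Injective f := Subtype.val_injective
  have hDtoProd : ∀ s, (D s).toProd = (f s, f (g s)) := by
    intro s
    have h1 : (D s).toProd.1 = f s := hDf s
    have h2 : (D s).toProd.2 = f (g s) := rfl
    rw [← h1, ← h2]
  have hcanon : ∀ (s : S) (d : G.Dart), d.toProd = (f s, f (g s)) → GoodDart G σ v' d := by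
    intro s d hd
    have : d = D s := SimpleGraph.Dart.ext _ _ (by rw [hd, hDtoProd])
    rw [this]; exact hDg s
  let x₀ : S := ⟨d₀.snd, d₀, hd₀, rfl⟩
  obtain ⟨i₀, j₀, hij, heq⟩ := Finite.exists_ne_map_eq_of_infinite (fun n : ℕ => g^[n] x₀)
  have hlt : ∃ i j : ℕ, i < j ∧ g^[i] x₀ = g^[j] x₀ := by
    rcases hij.lt_or_gt with h | h
    · exact ⟨i₀, j₀, h, heq⟩
    · exact ⟨j₀, i₀, h, heq.symm⟩
  obtain ⟨i, j, hij', heq'⟩ := hlt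
  set x := g^[i] x₀ with hx
  have hper : g^[j - i] x = x := by
    have h1 : g^[(j - i) + i] x₀ = g^[i] x₀ := by
      rw [Nat.sub_add_cancel hij'.le]; exact heq'.symm
    rw [Function.iterate_add_apply] at h1
    exact h1
  have hex : ∃ k, 0 < k ∧ g^[k] x = x := ⟨j - i, by omega, hper⟩
  set m := Nat.find hex with hm
  obtain ⟨hm0, hmx⟩ := Nat.find_spec hex
  have hdist : ∀ a b : ℕ, a < b → b < m → g^[a] x ≠ g^[b] x := by
    intro a b hab hbm hEq
    have h1 : g^[(m - b) + b] x = x := by rw [Nat.sub_add_cancel hbm.le]; exact hmx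
    rw [Function.iterate_add_apply, ← hEq, ← Function.iterate_add_apply] at h1
    exact Nat.find_min hex (show m - b + a < m by omega) ⟨by omega, h1⟩
  have hdist0 : ∀ a : ℕ, 0 < a → a < m → g^[a] x ≠ x := fun a h1 h2 hEq =>
    Nat.find_min hex h2 ⟨h1, hEq⟩
  have hdistm : ∀ a b : ℕ, a < b → b ≤ m → 0 < a → g^[a] x ≠ g^[b] x := by
    intro a b hab hbm ha0 hEq
    rcases eq_or_lt_of_le hbm with rfl | hbm'
    · exact hdist0 a ha0 (by omega) (by rw [hEq]; exact hmx)
    · exact hdist a b hab hbm' hEq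
  let p0 := iterWalk f g adj x m
  let p : G.Walk (f x) (f x) := p0.copy rfl (congrArg f hmx)
  have hdarts : p.darts = p0.darts := Walk.darts_copy _ _ _
  have hsupport : p.support = p0.support := Walk.support_copy _ _ _
  have htoProd : p.darts.map SimpleGraph.Dart.toProd
      = (List.range m).map (fun k => (f (g^[k] x), f (g^[k + 1] x))) := by
    rw [hdarts]; exact iterWalk_toProd f g adj x m
  have hgood : ∀ d ∈ p.darts, GoodDart G σ v' d := by
    intro d hd
    have : d.toProd ∈ p.darts.map SimpleGraph.Dart.toProd := List.mem_map_of_mem hd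
    rw [htoProd] at this
    obtain ⟨k, _, hk⟩ := List.mem_map.mp this
    refine hcanon (g^[k] x) d ?_
    rw [← hk, Function.iterate_succ_apply']
  have hndtoProd : (p.darts.map SimpleGraph.Dart.toProd).Nodup := by
    rw [htoProd]
    refine List.Nodup.map_on ?_ List.nodup_range
    intro k₁ h₁ k₂ h₂ hEq
    rw [List.mem_range] at h₁ h₂
    have hgg : g^[k₁] x = g^[k₂] x := hfinj (congrArg Prod.fst hEq)
    by_contra hnk
    rcases Nat.lt_or_ge k₁ k₂ with h | h
    · exact hdist k₁ k₂ h h₂ hgg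
    · exact hdist k₂ k₁ (by omega) h₁ hgg.symm
  have hdnodup : p.darts.Nodup := List.Nodup.of_map _ hndtoProd
  have hednodup : p.edges.Nodup := by
    have hE : p.edges = p.darts.map SimpleGraph.Dart.edge := rfl
    rw [hE]
    refine List.Nodup.map_on ?_ hdnodup
    intro d₁ h₁ d₂ h₂ hEq
    exact goodDart_eq_of_edge_eq (hgood d₁ h₁) (hgood d₂ h₂) hEq
  have hsup : p.support = (List.range (m + 1)).map (fun k => f (g^[k] x)) := by
    rw [hsupport]; exact iterWalk_support f g adj x m
  have hlen : p.support.length = m + 1 := by rw [hsup]; simp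
  have hnnil : p ≠ Walk.nil := by
    intro hEq
    rw [hEq] at hlen
    simp at hlen
    omega
  have htail : p.support.tail = (List.range m).map (fun k => f (g^[k + 1] x)) := by
    rw [hsup, List.range_succ_eq_map, List.map_cons, List.tail_cons, List.map_map]
    rfl
  have htnodup : p.support.tail.Nodup := by
    rw [htail]
    refine List.Nodup.map_on ?_ List.nodup_range
    intro k₁ h₁ k₂ h₂ hEq
    rw [List.mem_range] at h₁ h₂
    have hgg : g^[k₁ + 1] x = g^[k₂ + 1] x := hfinj hEq
    by_contra hnk
    rcases Nat.lt_or_ge k₁ k₂ with h | h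
    · exact hdistm (k₁ + 1) (k₂ + 1) (by omega) (by omega) (by omega) hgg
    · exact hdistm (k₂ + 1) (k₁ + 1) (by omega) (by omega) (by omega) hgg.symm
  exact ⟨f x, p, (Walk.isCycle_def _).mpr ⟨⟨hednodup⟩, hnnil, htnodup⟩, hgood⟩
theorem circuit_iff_indec (hv : v' ∈ flowSubmodule G σ) :
    IsCircuitElement G σ v' ↔ (v' ≠ 0 ∧ ∀ a b : Sym2 V → ℤ, a ∈ flowSubmodule G σ →
      b ∈ flowSubmodule G σ → a + b = v' → 0 ≤ flowInner a b → a = 0 ∨ b = 0) := by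
  constructor
  · rintro ⟨u, p, hp, rfl⟩
    refine ⟨?_, fun a b ha hb hab hin => circuit_indec hσ p hp ha hb hab hin⟩
    obtain ⟨e₀, he₀⟩ := cycle_exists_pm hσ p hp
    intro h0
    have h1 := congrFun h0 e₀
    simp only [Pi.zero_apply] at h1
    rcases he₀ with h2 | h2 <;> rw [h1] at h2 <;> omega
  · rintro ⟨hne, hmin⟩
    obtain ⟨u, p, hp, hgood⟩ := exists_conforming hσ hv hne
    set c := walkFlow σ p with hc
    have hcmem : c ∈ flowSubmodule G σ := walkFlow_mem hσ p
    have htrail := hp.isCircuit.isTrail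
    have hkey : ∀ e, c e ≠ 0 → (c e = 1 ∨ c e = -1) ∧ 1 ≤ c e * v' e := by
      intro e hce
      have hmem : e ∈ p.edges := by
        by_contra hmem
        exact hce (walkFlow_of_not_mem_edges hσ _ e hmem)
      obtain ⟨d, hd, rfl⟩ := List.mem_map.mp hmem
      have hval := walkFlow_dart hσ htrail hd
      have hgd := hgood d hd
      rcases hgd with ⟨h1, h2⟩ | ⟨h1, h2⟩
      · rw [if_pos h2] at hval
        refine ⟨Or.inl hval, ?_⟩
        rw [hc, hval, one_mul]; omega
      · have hne2 : d.toProd ≠ σ d.edge := by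
          intro hEq
          apply d.adj.ne
          exact (congrArg Prod.fst h2).trans (congrArg Prod.snd hEq).symm
        rw [if_neg hne2] at hval
        refine ⟨Or.inr hval, ?_⟩
        rw [hc, hval, neg_one_mul]; omega
    have hc0 : c ≠ 0 := by
      obtain ⟨e₀, he₀⟩ := cycle_exists_pm hσ p hp
      intro h0
      have h1 := congrFun h0 e₀
      simp only [Pi.zero_apply] at h1
      rw [← hc] at he₀
      rcases he₀ with h2 | h2 <;> rw [h1] at h2 <;> omega
    have hinner : 0 ≤ flowInner c (v' - c) := by
      show (0 : ℤ) ≤ ∑ e : Sym2 V, c e * (v' - c) e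
      refine Finset.sum_nonneg fun e _ => ?_
      by_cases hce : c e = 0
      · simp [hce]
      · obtain ⟨hpm, hge⟩ := hkey e hce
        have hsq : c e * c e = 1 := by rcases hpm with h | h <;> rw [h] <;> ring
        have hrw : c e * (v' - c) e = c e * v' e - c e * c e := by
          simp only [Pi.sub_apply]; ring
        rw [hrw, hsq]
        linarith
    rcases hmin c (v' - c) hcmem (Submodule.sub_mem _ hv hcmem) (by ring) hinner with h | h
    · exact absurd h hc0
    · refine ⟨u, p, hp, ?_⟩
      rw [sub_eq_zero] at h
      rw [hc] at h
      exact h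
end Aux

/-- Let `G` and `G'` be finite 2-edge-connected graphs with orientations
and `φ : F(G) ≃ F(G')` an isometry of their lattices of integer flows. Then `φ` maps
circuit elements of `F(G)` bijectively to circuit elements of `F(G')`. -/
theorem stmt_15 {V V' : Type*} [Fintype V] [DecidableEq V] [Fintype V'] [DecidableEq V']
    (G : SimpleGraph V) (G' : SimpleGraph V')
    (hG : G.Connected) (hbr : ∀ e, ¬ G.IsBridge e)
    (hG' : G'.Connected) (hbr' : ∀ e, ¬ G'.IsBridge e)
    (σ : Sym2 V → V × V) (hσ : ∀ e, Sym2.mk (σ e).1 (σ e).2 = e)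
    (σ' : Sym2 V' → V' × V') (hσ' : ∀ e, Sym2.mk (σ' e).1 (σ' e).2 = e)
    (φ : ↥(flowSubmodule G σ) ≃ₗ[ℤ] ↥(flowSubmodule G' σ'))
    (hiso : ∀ a b : ↥(flowSubmodule G σ),
      flowInner (φ a : Sym2 V' → ℤ) (φ b : Sym2 V' → ℤ) =
        flowInner (a : Sym2 V → ℤ) (b : Sym2 V → ℤ)) :
    ∀ v : ↥(flowSubmodule G σ),
      IsCircuitElement G σ (v : Sym2 V → ℤ) ↔
        IsCircuitElement G' σ' (φ v : Sym2 V' → ℤ) := by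
  intro v
  rw [circuit_iff_indec hσ v.2, circuit_iff_indec hσ' (φ v).2]
  constructor
  · rintro ⟨hne, hmin⟩
    constructor
    · intro h0
      have h1 : φ v = 0 := by
        apply Subtype.ext
        exact h0
      have h2 : v = 0 := by
        have := congrArg φ.symm h1
        rwa [φ.symm_apply_apply, map_zero] at this
      exact hne (by rw [h2]; rfl)
    · intro a b ha hb hab hin
      set a' : ↥(flowSubmodule G σ) := φ.symm ⟨a, ha⟩ with ha'
      set b' : ↥(flowSubmodule G σ) := φ.symm ⟨b, hb⟩ with hb'
      have hphia : φ a' = ⟨a, ha⟩ := φ.apply_symm_apply _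
      have hphib : φ b' = ⟨b, hb⟩ := φ.apply_symm_apply _
      have hsum' : a' + b' = v := by
        have h3 : (⟨a, ha⟩ + ⟨b, hb⟩ : ↥(flowSubmodule G' σ')) = φ v := Subtype.ext hab
        calc a' + b' = φ.symm (⟨a, ha⟩ + ⟨b, hb⟩) := (map_add φ.symm _ _).symm
          _ = φ.symm (φ v) := by rw [h3]
          _ = v := φ.symm_apply_apply v
      have hsum : (a' : Sym2 V → ℤ) + (b' : Sym2 V → ℤ) = (v : Sym2 V → ℤ) := by
        rw [← Submodule.coe_add, hsum']
      have hinner : 0 ≤ flowInner (a' : Sym2 V → ℤ) (b' : Sym2 V → ℤ) := by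
        rw [← hiso a' b', hphia, hphib]
        exact hin
      rcases hmin _ _ a'.2 b'.2 hsum hinner with h | h
      · left
        have ha0 : a' = 0 := Subtype.ext h
        have : (⟨a, ha⟩ : ↥(flowSubmodule G' σ')) = 0 := by rw [← hphia, ha0, map_zero]
        exact congrArg Subtype.val this
      · right
        have hb0 : b' = 0 := Subtype.ext h
        have : (⟨b, hb⟩ : ↥(flowSubmodule G' σ')) = 0 := by rw [← hphib, hb0, map_zero]
        exact congrArg Subtype.val this
  · rintro ⟨hne, hmin⟩
    constructor
    · intro h0
      have h1 : v = 0 := Subtype.ext h0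
      exact hne (by rw [h1, map_zero]; rfl)
    · intro a b ha hb hab hin
      set a' : ↥(flowSubmodule G' σ') := φ ⟨a, ha⟩ with ha'
      set b' : ↥(flowSubmodule G' σ') := φ ⟨b, hb⟩ with hb'
      have hsum' : a' + b' = φ v := by
        have h3 : (⟨a, ha⟩ + ⟨b, hb⟩ : ↥(flowSubmodule G σ)) = v := Subtype.ext hab
        rw [ha', hb', ← map_add, h3]
      have hsum : (a' : Sym2 V' → ℤ) + (b' : Sym2 V' → ℤ) = (φ v : Sym2 V' → ℤ) := by
        rw [← Submodule.coe_add, hsum']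
      have hinner : 0 ≤ flowInner (a' : Sym2 V' → ℤ) (b' : Sym2 V' → ℤ) := by
        rw [ha', hb', hiso]
        exact hin
      rcases hmin _ _ a'.2 b'.2 hsum hinner with h | h
      · left
        have ha0 : a' = 0 := Subtype.ext h
        have : (⟨a, ha⟩ : ↥(flowSubmodule G σ)) = 0 := by
          have := congrArg φ.symm ha0
          rwa [ha', φ.symm_apply_apply, map_zero] at this
        exact congrArg Subtype.val this
      · right
        have hb0 : b' = 0 := Subtype.ext h
        have : (⟨b, hb⟩ : ↥(flowSubmodule G σ)) = 0 := by
          have := congrArg φ.symm hb0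
          rwa [hb', φ.symm_apply_apply, map_zero] at this
        exact congrArg Subtype.val this
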